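/- Ryde's formula: for a function f defined on the q-lattice and x ≠ 0, the n-th iterated q-derivative satisfies (∂^n f)(x) = (1-q)^{-n} x^{-n} Σ_{k=0}^{n} (-1)^k [n choose k]_q q^{-k(n-k)} q^{-k(k-1)/2} f(q^k x). -/

import Mathlib

open scoped BigOperators

noncomputable section

/-- finite q-Pochhammer symbol `(a;q)_k` -/
def qPoch (q a : ℝ) (k : ℕ) : ℝ := ∏ j ∈ Finset.range k, (1 - a * q ^ j)

/-- infinite q-Pochhammer symbol `(a;q)_∞` -/
def qPochInf (q a : ℝ) : ℝ := ∏' j : ℕ, (1 - a * q ^ j)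

/-- q-integral over the lattice `L(γ) = {± q^k γ}` -/
def qInt (q γ : ℝ) (f : ℝ → ℝ) : ℝ :=
  (1 - q) * ∑' k : ℤ, (q ^ k * γ) * (f (q ^ k * γ) + f (-(q ^ k * γ)))

/-- k-th q-moment -/
def qMoment (q γ : ℝ) (e : ℕ) (f : ℝ → ℝ) : ℝ :=
  q ^ (e * (e + 1) / 2) * qInt q γ (fun x => f x * x ^ e)

/-- k-th strict q-moment -/
def qNu (q γ : ℝ) (e : ℕ) (f : ℝ → ℝ) : ℝ :=
  q ^ (e * (e + 1) / 2) * qInt q γ (fun x => |f x * x ^ e|)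

/-- q-derivative -/
def qDeriv (q : ℝ) (f : ℝ → ℝ) : ℝ → ℝ := fun x => (f x - f (q * x)) / ((1 - q) * x)

/-- q-factorial `[e]_q!` -/
def qFact (q : ℝ) (e : ℕ) : ℝ := qPoch q q e / (1 - q) ^ e

/-- q-binomial coefficient -/
def qBinom (q : ℝ) (n k : ℕ) : ℝ := qPoch q q n / (qPoch q q k * qPoch q q (n - k))

/-- q-convolution -/
def qConv (q γ : ℝ) (f g : ℝ → ℝ) : ℝ → ℝ :=
  fun x => ∑' e : ℕ, (-1) ^ e * qMoment q γ e f / qFact q e * (qDeriv q)^[e] g x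

/-- the q-Gaussian `e_{q²}(-x²)` -/
def qGauss (q : ℝ) : ℝ → ℝ := fun x => 1 / qPochInf (q ^ 2) (-(x ^ 2))

/-- discrete q-Hermite II polynomials -/
def qHermiteII (q : ℝ) (k : ℕ) (x : ℝ) : ℝ :=
  qPoch q q k * ∑ l ∈ Finset.range (k / 2 + 1),
    (-1) ^ l * q ^ (2 * l ^ 2 + l) / q ^ (2 * l * k) * x ^ (k - 2 * l) /
      (qPoch (q ^ 2) (q ^ 2) l * qPoch q q (k - 2 * l))

/-- discrete delta function on the lattice, supported at `η γ q^p` -/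
def qdelta (q γ η : ℝ) (p : ℤ) : ℝ → ℝ := fun x => if x = η * γ * q ^ p then 1 else 0

lemma qPoch_pos {q : ℝ} (hq : q ∈ Set.Ioo (0:ℝ) 1) (k : ℕ) : 0 < qPoch q q k := by
  obtain ⟨h0, h1⟩ := hq
  apply Finset.prod_pos
  intro j _
  have hlt : q * q ^ j ≤ q * 1 :=
    mul_le_mul_of_nonneg_left (pow_le_one₀ h0.le h1.le) h0.le
  nlinarith

lemma qPoch_ne {q : ℝ} (hq : q ∈ Set.Ioo (0:ℝ) 1) (k : ℕ) : qPoch q q k ≠ 0 :=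
  (qPoch_pos hq k).ne'

lemma qPoch_succ (q : ℝ) (k : ℕ) : qPoch q q (k+1) = qPoch q q k * (1 - q^(k+1)) := by
  unfold qPoch
  rw [Finset.prod_range_succ, pow_succ']

lemma qBinom_zero {q : ℝ} (hq : q ∈ Set.Ioo (0:ℝ) 1) (n : ℕ) : qBinom q n 0 = 1 := by
  simp [qBinom, qPoch, div_self (qPoch_ne hq n)]
  exact qPoch_ne hq n

lemma qBinom_self {q : ℝ} (hq : q ∈ Set.Ioo (0:ℝ) 1) (n : ℕ) : qBinom q n n = 1 := by
  unfold qBinom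
  rw [Nat.sub_self]
  have : qPoch q q 0 = 1 := by simp [qPoch]
  rw [this, mul_one]
  exact div_self (qPoch_ne hq n)

lemma one_sub_pow_ne {q : ℝ} (hq : q ∈ Set.Ioo (0:ℝ) 1) (k : ℕ) : (1:ℝ) - q^(k+1) ≠ 0 := by
  have : q^(k+1) < 1 := pow_lt_one₀ hq.1.le hq.2 (Nat.succ_ne_zero k)
  linarith

lemma pascal {q : ℝ} (hq : q ∈ Set.Ioo (0:ℝ) 1) {n k : ℕ} (hk : k < n) :
    qBinom q (n+1) (k+1) = q^(k+1) * qBinom q n (k+1) + qBinom q n k := by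
  obtain ⟨m, rfl⟩ : ∃ m, n = k + 1 + m := ⟨n - (k+1), by omega⟩
  unfold qBinom
  rw [show k+1+m+1-(k+1) = m+1 from by omega, show k+1+m-(k+1) = m from by omega,
      show k+1+m-k = m+1 from by omega,
      qPoch_succ q (k+1+m), qPoch_succ q m, qPoch_succ q k,
      show k+1+m+1 = (k+1)+(m+1) from by ring, pow_add]
  have h1 := qPoch_ne hq k
  have h2 := qPoch_ne hq m
  have h3 := qPoch_ne hq (k+1+m)
  have h4 := one_sub_pow_ne hq k
  have h5 := one_sub_pow_ne hq m
  field_simp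
  ring

lemma tri (k : ℕ) : (k+1)*k/2 = k*(k-1)/2 + k := by
  cases k with
  | zero => rfl
  | succ m =>
    rw [show (m+1+1)*(m+1) = (m+1)*m + 2*(m+1) from by ring, show m+1-1 = m from rfl,
        Nat.add_mul_div_left _ _ (by norm_num : 0 < 2)]

lemma coefZero {q : ℝ} (hq : q ∈ Set.Ioo (0:ℝ) 1) (n : ℕ) :
    (-1:ℝ)^0 * qBinom q n 0 / (q^(0*(n-0)) * q^(0*(0-1)/2)) = 1 := by
  simp [qBinom_zero hq]

lemma coefTop {q : ℝ} (hq : q ∈ Set.Ioo (0:ℝ) 1) (n : ℕ) :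
    (-1:ℝ)^(n+1) * qBinom q (n+1) (n+1) / (q^((n+1)*((n+1)-(n+1))) * q^((n+1)*((n+1)-1)/2))
      = -(1/q^n) * ((-1:ℝ)^n * qBinom q n n / (q^(n*(n-n)) * q^(n*(n-1)/2))) := by
  have hq0 : q ≠ 0 := hq.1.ne'
  rw [qBinom_self hq, qBinom_self hq, Nat.sub_self, Nat.sub_self,
      show (n+1)*((n+1)-1)/2 = (n+1)*n/2 from rfl, tri n, pow_add, pow_succ]
  simp only [Nat.mul_zero, pow_zero]
  field_simp
  ring

lemma coefStep {q : ℝ} (hq : q ∈ Set.Ioo (0:ℝ) 1) {n k : ℕ} (hk : k < n) :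
    (-1:ℝ)^(k+1) * qBinom q (n+1) (k+1) / (q^((k+1)*((n+1)-(k+1))) * q^((k+1)*((k+1)-1)/2))
      = (-1:ℝ)^(k+1) * qBinom q n (k+1) / (q^((k+1)*(n-(k+1))) * q^((k+1)*((k+1)-1)/2))
        - (1/q^n) * ((-1:ℝ)^k * qBinom q n k / (q^(k*(n-k)) * q^(k*(k-1)/2))) := by
  have hq0 : q ≠ 0 := hq.1.ne'
  rw [pascal hq hk]
  obtain ⟨m, rfl⟩ : ∃ m, n = k + 1 + m := ⟨n - (k+1), by omega⟩
  rw [show k+1+m+1-(k+1) = m+1 from by omega, show k+1+m-(k+1) = m from by omega,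
      show k+1+m-k = m+1 from by omega,
      show (k+1)*((k+1)-1)/2 = (k+1)*k/2 from rfl, tri k,
      show (k+1)*(m+1) = k*m + k + m + 1 from by ring,
      show (k+1)*m = k*m + m from by ring,
      show k*(m+1) = k*m + k from by ring,
      show k+1+m = k+m+1 from by ring]
  simp only [pow_add, pow_succ, pow_zero]
  field_simp
  ring

/-- Ryde's formula for iterated q-derivatives. -/
theorem stmt1 (q : ℝ) (hq : q ∈ Set.Ioo (0 : ℝ) 1) (f : ℝ → ℝ) (n : ℕ) (x : ℝ) (hx : x ≠ 0) :
    (qDeriv q)^[n] f x =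
      (1 / ((1 - q) ^ n * x ^ n)) *
        ∑ k ∈ Finset.range (n + 1),
          (-1) ^ k * qBinom q n k / (q ^ (k * (n - k)) * q ^ (k * (k - 1) / 2)) *
            f (q ^ k * x) := by
  induction n generalizing x with
  | zero =>
    simp [qBinom_zero hq]
  | succ n ih =>
    have hq0 : (0:ℝ) < q := hq.1
    have hq1 : q < 1 := hq.2
    have h1q : (1:ℝ) - q ≠ 0 := by linarith
    have hqx : q * x ≠ 0 := mul_ne_zero hq0.ne' hx
    rw [Function.iterate_succ_apply']
    simp only [qDeriv]
    rw [ih x hx, ih (q*x) hqx]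
    have hrw : ∀ k : ℕ, q ^ k * (q * x) = q ^ (k+1) * x := fun k => by ring
    simp only [hrw]
    have key : (∑ k ∈ Finset.range (n+1+1),
          (-1:ℝ)^k * qBinom q (n+1) k / (q^(k*((n+1)-k)) * q^(k*(k-1)/2)) * f (q^k * x))
        = (∑ k ∈ Finset.range (n+1),
            (-1:ℝ)^k * qBinom q n k / (q^(k*(n-k)) * q^(k*(k-1)/2)) * f (q^k * x))
          - (1/q^n) * ∑ k ∈ Finset.range (n+1),
            (-1:ℝ)^k * qBinom q n k / (q^(k*(n-k)) * q^(k*(k-1)/2)) * f (q^(k+1) * x) := by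
      rw [Finset.sum_range_succ, Finset.sum_range_succ', Finset.sum_range_succ',
          Finset.sum_range_succ]
      have hmid : (∑ i ∈ Finset.range n,
            (-1:ℝ)^(i+1) * qBinom q (n+1) (i+1) / (q^((i+1)*((n+1)-(i+1))) * q^((i+1)*((i+1)-1)/2))
              * f (q^(i+1) * x))
          = ∑ i ∈ Finset.range n,
            ((-1:ℝ)^(i+1) * qBinom q n (i+1) / (q^((i+1)*(n-(i+1))) * q^((i+1)*((i+1)-1)/2))
              * f (q^(i+1) * x)
            - (1/q^n) * ((-1:ℝ)^i * qBinom q n i / (q^(i*(n-i)) * q^(i*(i-1)/2))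
              * f (q^(i+1) * x))) := by
        refine Finset.sum_congr rfl fun i hi => ?_
        rw [coefStep hq (Finset.mem_range.mp hi)]
        ring
      rw [hmid, Finset.sum_sub_distrib, mul_add, coefTop hq n, coefZero hq (n+1),
          coefZero hq n, ← Finset.mul_sum]
      ring
    rw [key]
    set A := ∑ k ∈ Finset.range (n+1),
      (-1:ℝ)^k * qBinom q n k / (q^(k*(n-k)) * q^(k*(k-1)/2)) * f (q^k * x) with hA
    set B := ∑ k ∈ Finset.range (n+1),
      (-1:ℝ)^k * qBinom q n k / (q^(k*(n-k)) * q^(k*(k-1)/2)) * f (q^(k+1) * x) with hB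
    clear_value A B
    field_simp
    ring
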